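/- Let $\theta \in (0,1)$, $c \ge 0$, and $t > 0$, and let $R$ be a nonnegative random variable with $\mathbb{P}(R > r) \le c\, e^{-2\theta r}$ for all $r \ge 0$. Then $\mathbb{E}\big[e^{-(2-\theta)(t - \min(R,t))}\big] \le C (1+t)\, e^{-t \min\{2\theta, 2-\theta\}}$ for some constant $C = C(c,\theta)$ not depending on $t$. -/

import Mathlib

open MeasureTheory ProbabilityTheory

/-- Key single-site estimate: if `R ≥ 0` has tail `P(R > r) ≤ c e^{-2θr}`, then there
is `C = C(c,θ)` with `E[e^{-(2-θ)(t - min(R,t))}] ≤ C (1+t) e^{-t·min{2θ, 2-θ}}`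
for all positive `t`. -/
theorem truncated_exp_moment_bound (θ c : ℝ) (hθ : θ ∈ Set.Ioo (0 : ℝ) 1)
    (hc : 0 ≤ c) :
    ∃ C : ℝ, 0 < C ∧ ∀ (t : ℝ), 0 < t →
      ∀ (Ω : Type) (_ : MeasureSpace Ω) (_ : IsProbabilityMeasure (ℙ : Measure Ω))
        (R : Ω → ℝ), Measurable R → (∀ ω, 0 ≤ R ω) →
        (∀ r : ℝ, 0 ≤ r → (ℙ {ω | r < R ω}).toReal ≤ c * Real.exp (-2 * θ * r)) →
        ∫ ω, Real.exp (-(2 - θ) * (t - min (R ω) t)) ≤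
          C * (1 + t) * Real.exp (-t * min (2 * θ) (2 - θ)) := by
  obtain ⟨hθ0, hθ1⟩ := hθ
  refine ⟨(c + 1) * Real.exp 2, by positivity, ?_⟩
  intro t ht Ω mΩ hprob R hRm hR0 htail
  set μ : ℝ := min (2 * θ) (2 - θ) with hμ
  have hμ2θ : μ ≤ 2 * θ := min_le_left _ _
  have hμ2θ' : μ ≤ 2 - θ := min_le_right _ _
  have hμpos : 0 < μ := lt_min (by linarith) (by linarith)
  set n : ℕ := ⌊t⌋₊ with hn
  set B : ℝ := (c + 1) * Real.exp 2 * Real.exp (-t * μ) with hB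
  have hBnn : 0 ≤ B := by positivity
  have hset : ∀ k : ℕ, MeasurableSet {ω : Ω | t - (k + 1) < R ω} := fun k =>
    measurableSet_lt measurable_const hRm
  set g : Ω → ℝ := fun ω => ∑ k ∈ Finset.range (n + 1),
    Set.indicator {ω : Ω | t - (k + 1) < R ω} (fun _ => Real.exp (-(2 - θ) * k)) ω with hg
  have hint : ∀ k : ℕ, Integrable
      (Set.indicator {ω : Ω | t - (k + 1) < R ω} (fun _ => Real.exp (-(2 - θ) * k)))
      (ℙ : Measure Ω) :=
    fun k => (integrable_const _).indicator (hset k)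
  have hgint : Integrable g (ℙ : Measure Ω) := integrable_finset_sum _ fun k _ => hint k
  have hfg : ∀ ω, Real.exp (-(2 - θ) * (t - min (R ω) t)) ≤ g ω := by
    intro ω
    set m : ℝ := t - min (R ω) t with hm
    have hm0 : 0 ≤ m := by
      have : min (R ω) t ≤ t := min_le_right _ _
      simp only [hm]; linarith
    have hmt : m ≤ t := by
      have : 0 ≤ min (R ω) t := le_min (hR0 ω) ht.le
      simp only [hm]; linarith
    set k : ℕ := ⌊m⌋₊ with hk
    have hkmem : k ∈ Finset.range (n + 1) := by
      simp only [Finset.mem_range, Nat.lt_succ_iff]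
      exact Nat.floor_le_floor hmt
    have h1 : Real.exp (-(2 - θ) * m) ≤
        Set.indicator {ω : Ω | t - (k + 1) < R ω} (fun _ => Real.exp (-(2 - θ) * k)) ω := by
      have hmem : ω ∈ {ω : Ω | t - (k + 1) < R ω} := by
        have h2 : m < k + 1 := Nat.lt_floor_add_one m
        have h3 : min (R ω) t ≤ R ω := min_le_left _ _
        simp only [Set.mem_setOf_eq]
        have : t - m = min (R ω) t := by simp only [hm]; ring
        linarith
      rw [Set.indicator_of_mem hmem]
      apply Real.exp_le_exp.2
      have hfl := Nat.floor_le hm0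
      nlinarith
    refine le_trans h1 ?_
    show Set.indicator {ω : Ω | t - (k + 1) < R ω} (fun _ => Real.exp (-(2 - θ) * k)) ω ≤
      ∑ i ∈ Finset.range (n + 1),
        Set.indicator {ω : Ω | t - (i + 1) < R ω} (fun _ => Real.exp (-(2 - θ) * i)) ω
    exact Finset.single_le_sum
      (f := fun i : ℕ => Set.indicator {ω : Ω | t - (i + 1) < R ω}
        (fun _ => Real.exp (-(2 - θ) * i)) ω)
      (fun i _ => Set.indicator_nonneg (fun _ _ => (Real.exp_pos _).le) _) hkmem
  have step1 : ∫ ω, Real.exp (-(2 - θ) * (t - min (R ω) t)) ≤ ∫ ω, g ω := by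
    refine integral_mono_of_nonneg ?_ hgint ?_
    · exact Filter.Eventually.of_forall fun ω => (Real.exp_pos _).le
    · exact Filter.Eventually.of_forall hfg
  have step2 : ∫ ω, g ω = ∑ k ∈ Finset.range (n + 1),
      ((ℙ : Measure Ω) {ω : Ω | t - (k + 1) < R ω}).toReal * Real.exp (-(2 - θ) * k) := by
    rw [hg, integral_finset_sum _ fun k _ => hint k]
    refine Finset.sum_congr rfl fun k _ => ?_
    rw [integral_indicator_const _ (hset k)]
    simp [smul_eq_mul, measureReal_def]
  have hterm : ∀ k ∈ Finset.range (n + 1),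
      ((ℙ : Measure Ω) {ω : Ω | t - (k + 1) < R ω}).toReal * Real.exp (-(2 - θ) * k) ≤ B := by
    intro k hkmem
    have hk_le : (k : ℝ) ≤ t := by
      have h := Nat.lt_succ_iff.1 (Finset.mem_range.1 hkmem)
      have hkn : (k : ℝ) ≤ n := by exact_mod_cast h
      exact hkn.trans (Nat.floor_le ht.le)
    have hknn : (0 : ℝ) ≤ k := Nat.cast_nonneg k
    by_cases hcase : 0 ≤ t - (k + 1)
    · have h1 := htail _ hcase
      have h2 : ((ℙ : Measure Ω) {ω : Ω | t - (k + 1) < R ω}).toReal *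
          Real.exp (-(2 - θ) * k) ≤
          c * Real.exp (-2 * θ * (t - (k + 1))) * Real.exp (-(2 - θ) * k) :=
        mul_le_mul_of_nonneg_right h1 (Real.exp_pos _).le
      refine h2.trans ?_
      rw [hB]
      calc c * Real.exp (-2 * θ * (t - (k + 1))) * Real.exp (-(2 - θ) * k)
          = c * Real.exp (-2 * θ * (t - (k + 1)) + -(2 - θ) * k) := by
            rw [mul_assoc, ← Real.exp_add]
        _ ≤ (c + 1) * Real.exp (2 + -t * μ) := by
            refine mul_le_mul (by linarith) ?_ (Real.exp_pos _).le (by linarith)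
            apply Real.exp_le_exp.2
            have e1 : μ * (t - k) ≤ 2 * θ * (t - k) :=
              mul_le_mul_of_nonneg_right hμ2θ (by linarith)
            have e2 : μ * k ≤ (2 - θ) * k :=
              mul_le_mul_of_nonneg_right hμ2θ' hknn
            nlinarith
        _ = (c + 1) * Real.exp 2 * Real.exp (-t * μ) := by
            rw [mul_assoc, ← Real.exp_add]
    · have h1 : ((ℙ : Measure Ω) {ω : Ω | t - (k + 1) < R ω}).toReal ≤ 1 := by
        have h := prob_le_one (μ := (ℙ : Measure Ω)) (s := {ω : Ω | t - (k + 1) < R ω})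
        calc ((ℙ : Measure Ω) {ω : Ω | t - (k + 1) < R ω}).toReal
            ≤ (1 : ENNReal).toReal := ENNReal.toReal_mono ENNReal.one_ne_top h
          _ = 1 := by simp
      have h2 : ((ℙ : Measure Ω) {ω : Ω | t - (k + 1) < R ω}).toReal *
          Real.exp (-(2 - θ) * k) ≤ Real.exp (-(2 - θ) * k) := by
        nlinarith [Real.exp_pos (-(2 - θ) * k), ENNReal.toReal_nonneg
          (a := (ℙ : Measure Ω) {ω : Ω | t - (k + 1) < R ω})]
      refine h2.trans ?_
      rw [hB, mul_assoc, ← Real.exp_add]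
      have hexp : Real.exp (-(2 - θ) * k) ≤ Real.exp (2 + -t * μ) := by
        apply Real.exp_le_exp.2
        have hk' : t - 1 < k := by linarith
        have e1 : μ * t ≤ (2 - θ) * t := mul_le_mul_of_nonneg_right hμ2θ' ht.le
        nlinarith
      calc Real.exp (-(2 - θ) * k) ≤ Real.exp (2 + -t * μ) := hexp
        _ ≤ (c + 1) * Real.exp (2 + -t * μ) := by nlinarith [Real.exp_pos (2 + -t * μ)]
  have step3 : ∑ k ∈ Finset.range (n + 1),
      ((ℙ : Measure Ω) {ω : Ω | t - (k + 1) < R ω}).toReal * Real.exp (-(2 - θ) * k) ≤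
      (n + 1) * B := by
    calc ∑ k ∈ Finset.range (n + 1),
        ((ℙ : Measure Ω) {ω : Ω | t - (k + 1) < R ω}).toReal * Real.exp (-(2 - θ) * k)
        ≤ ∑ _k ∈ Finset.range (n + 1), B := Finset.sum_le_sum hterm
      _ = (n + 1) * B := by simp [mul_comm]
  have hn_le : (n : ℝ) ≤ t := Nat.floor_le ht.le
  calc ∫ ω, Real.exp (-(2 - θ) * (t - min (R ω) t))
      ≤ ∫ ω, g ω := step1
    _ = _ := step2
    _ ≤ (n + 1) * B := step3
    _ ≤ (1 + t) * B := mul_le_mul_of_nonneg_right (by linarith) hBnn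
    _ = (c + 1) * Real.exp 2 * (1 + t) * Real.exp (-t * μ) := by rw [hB]; ring
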